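/- arXiv:2307.13033 — 2 statements merged into one kernel-verified Lean document; each statement's English description precedes it below -/
import Mathlib

section
/- Let g_x, g_{p'}, g_s be positive integers, d ≥ 1 an integer, h_x, h_{p'}, h_s > 0, m ≥ m_min > 0 and s_min > 0 real numbers, and set p'_max := g_{p'}·h_{p'}. Let D be the discrete derivative operator of order 2d with periodic boundary conditions on ℂ^{ℤ/g_xℤ} with grid spacing h_x, and let M be the diagonal matrix indexed by pairs (p̂', ŝ) ∈ {0,…,g_{p'}−1}×{0,…,g_s−1} with entries M_{(p̂',ŝ),(p̂',ŝ)} = (p̂'·h_{p'})/(m·(ŝ·h_s + s_min)²). Then ‖D ⊗ M‖ ≤ (p'_max/(m_min·s_min²)) · 2·(ln d + 1)/h_x. -/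
open scoped Matrix.Norms.L2Operator Kronecker

/-- The central finite-difference coefficients `c_{d,k}` of order `2d`:
`c_{d,k} = (-1)^(k+1) · (d!)² / (k·(d-k)!·(d+k)!)` for `k ≠ 0`, and `c_{d,0} = 0`. -/
noncomputable def centralFDCoeff (d : ℕ) (k : ℤ) : ℝ :=
  if k = 0 then 0
  else (-1 : ℝ) ^ (k + 1) * ((d.factorial : ℝ)) ^ 2 /
    ((k : ℝ) * (((d : ℤ) - k).toNat.factorial : ℝ) * (((d : ℤ) + k).toNat.factorial : ℝ))

/-- The discrete derivative operator of order `2d` with periodic boundary conditions on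
`ℂ^{ℤ/gℤ}` with grid spacing `h`:  `D = (1/h)·Σ_x Σ_{k=-d}^{d} c_{d,k}·E_{x-k,x}`. -/
noncomputable def discreteDeriv (g : ℕ) [NeZero g] (h : ℝ) (d : ℕ) :
    Matrix (ZMod g) (ZMod g) ℂ :=
  ((1 / h : ℝ) : ℂ) •
    ∑ x : ZMod g, ∑ k ∈ Finset.Icc (-(d : ℤ)) (d : ℤ),
      ((centralFDCoeff d k : ℝ) : ℂ) • Matrix.single (x - (k : ZMod g)) x (1 : ℂ)


lemma fact_sq_le (d : ℕ) : ∀ j, j ≤ d → (d.factorial)^2 ≤ (d-j).factorial * (d+j).factorial := by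
  intro j
  induction j with
  | zero => simp [sq]
  | succ j ih =>
    intro hj
    have hj' : j ≤ d := Nat.le_of_succ_le hj
    refine (ih hj').trans ?_
    have h1 : d - j = (d - (j+1)) + 1 := by omega
    have h2 : (d + (j+1)).factorial = (d + j + 1) * (d + j).factorial := by
      rw [show d + (j+1) = (d + j) + 1 by ring, Nat.factorial_succ]
    rw [h1, Nat.factorial_succ, h2]
    have : (d - (j+1)) + 1 ≤ d + j + 1 := by omega
    calc (d - (j + 1) + 1) * (d - (j + 1)).factorial * (d + j).factorial
        ≤ (d + j + 1) * (d - (j + 1)).factorial * (d + j).factorial :=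
          Nat.mul_le_mul_right _ (Nat.mul_le_mul_right _ this)
      _ = (d - (j + 1)).factorial * ((d + j + 1) * (d + j).factorial) := by ring

lemma abs_centralFDCoeff_le (d : ℕ) (k : ℤ) (hk1 : -(d:ℤ) ≤ k) (hk2 : k ≤ d) (hk : k ≠ 0) :
    |centralFDCoeff d k| ≤ (k.natAbs : ℝ)⁻¹ := by
  have key : (d.factorial)^2 ≤ ((d:ℤ) - k).toNat.factorial * ((d:ℤ) + k).toNat.factorial := by
    rcases lt_or_gt_of_ne hk with h | h
    · have e1 : ((d:ℤ) - k).toNat = d + k.natAbs := by omega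
      have e2 : ((d:ℤ) + k).toNat = d - k.natAbs := by omega
      rw [e1, e2, Nat.mul_comm]
      exact fact_sq_le d k.natAbs (by omega)
    · have e1 : ((d:ℤ) - k).toNat = d - k.natAbs := by omega
      have e2 : ((d:ℤ) + k).toNat = d + k.natAbs := by omega
      rw [e1, e2]
      exact fact_sq_le d k.natAbs (by omega)
  set a : ℝ := (((d:ℤ) - k).toNat.factorial : ℝ) with ha
  set b : ℝ := (((d:ℤ) + k).toNat.factorial : ℝ) with hb
  have hapos : 0 < a := by positivity
  have hbpos : 0 < b := by positivity
  have hF : ((d.factorial : ℝ))^2 ≤ a * b := by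
    rw [ha, hb]
    exact_mod_cast key
  have hj : (0:ℝ) < (k.natAbs : ℝ) := by
    have : k.natAbs ≠ 0 := Int.natAbs_ne_zero.mpr hk
    positivity
  have habs : |(k:ℝ)| = (k.natAbs : ℝ) := by
    rw [← Int.cast_abs, Int.abs_eq_natAbs, Int.cast_natCast]
  have hsign : |(-1:ℝ) ^ (k+1)| = 1 := by
    rcases Int.even_or_odd (k+1) with h | h
    · rw [h.neg_one_zpow]; simp
    · rw [h.neg_one_zpow]; simp
  rw [centralFDCoeff, if_neg hk, abs_div, abs_mul, hsign,
    one_mul, abs_mul, abs_mul, habs, abs_of_pos hapos, abs_of_pos hbpos, abs_pow, Nat.abs_cast]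
  rw [inv_eq_one_div, div_le_div_iff₀ (by positivity) hj]
  nlinarith [hF, hj, hapos, hbpos]

lemma sum_inv_natAbs (d : ℕ) :
    ∑ k ∈ Finset.Icc (1:ℤ) (d:ℤ), ((k.natAbs : ℝ))⁻¹ ≤ Real.log d + 1 := by
  have hcast : ∑ k ∈ Finset.Icc (1:ℤ) (d:ℤ), ((k.natAbs : ℝ))⁻¹
      = ∑ n ∈ Finset.Icc 1 d, ((n : ℝ))⁻¹ := by
    refine Finset.sum_nbij' (fun k => k.toNat) (fun n => (n : ℤ)) ?_ ?_ ?_ ?_ ?_ <;>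
      intro a ha <;> simp only [Finset.mem_Icc] at ha
    · simp only [Finset.mem_Icc]; omega
    · simp only [Finset.mem_Icc]; omega
    · show ((a.toNat : ℤ)) = a; omega
    · show ((a : ℤ)).toNat = a; omega
    · show ((a.natAbs : ℝ))⁻¹ = ((a.toNat : ℝ))⁻¹
      have : a.natAbs = a.toNat := by omega
      rw [this]
  rw [hcast]
  have h1 : ∑ n ∈ Finset.Icc 1 d, ((n : ℝ))⁻¹ = (harmonic d : ℝ) := by
    rw [harmonic_eq_sum_Icc]; push_cast; ring
  rw [h1]
  linarith [harmonic_le_one_add_log d]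

lemma sum_abs_coeff_le (d : ℕ) :
    ∑ k ∈ Finset.Icc (-(d:ℤ)) (d:ℤ), |centralFDCoeff d k| ≤ 2 * (Real.log d + 1) := by
  set f : ℤ → ℝ := fun k => if k = 0 then 0 else ((k.natAbs : ℝ))⁻¹ with hf
  have step1 : ∑ k ∈ Finset.Icc (-(d:ℤ)) (d:ℤ), |centralFDCoeff d k|
      ≤ ∑ k ∈ Finset.Icc (-(d:ℤ)) (d:ℤ), f k := by
    refine Finset.sum_le_sum fun k hk => ?_
    simp only [Finset.mem_Icc] at hk
    by_cases h0 : k = 0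
    · simp [h0, hf, centralFDCoeff]
    · simpa [hf, h0] using abs_centralFDCoeff_le d k hk.1 hk.2 h0
  refine step1.trans ?_
  have hsplit : Finset.Icc (-(d:ℤ)) (d:ℤ) = Finset.Ico (-(d:ℤ)) 0 ∪ Finset.Icc 0 (d:ℤ) := by
    ext a
    simp only [Finset.mem_Icc, Finset.mem_union, Finset.mem_Ico]
    omega
  have hdisj : Disjoint (Finset.Ico (-(d:ℤ)) 0) (Finset.Icc 0 (d:ℤ)) := by
    rw [Finset.disjoint_left]; intro a ha hb
    simp only [Finset.mem_Ico, Finset.mem_Icc] at *; omega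
  rw [hsplit, Finset.sum_union hdisj]
  have hneg : ∑ k ∈ Finset.Ico (-(d:ℤ)) 0, f k = ∑ k ∈ Finset.Icc (1:ℤ) (d:ℤ), f k := by
    refine Finset.sum_nbij' (fun k => -k) (fun k => -k) ?_ ?_ ?_ ?_ ?_ <;>
      intro a ha <;> simp only [Finset.mem_Ico, Finset.mem_Icc] at ha
    · simp only [Finset.mem_Icc]; omega
    · simp only [Finset.mem_Ico]; omega
    · show - -a = a; ring
    · show - -a = a; ring
    · show f a = f (-a)
      simp only [hf, neg_eq_zero, Int.natAbs_neg]
  have hz : ∑ k ∈ Finset.Icc (0:ℤ) (d:ℤ), f k = ∑ k ∈ Finset.Icc (1:ℤ) (d:ℤ), f k := by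
    have : Finset.Icc (0:ℤ) (d:ℤ) = insert 0 (Finset.Icc (1:ℤ) (d:ℤ)) := by
      ext a; simp only [Finset.mem_Icc, Finset.mem_insert]; omega
    rw [this, Finset.sum_insert (by simp)]
    simp [hf]
  rw [hneg, hz]
  have hle : ∑ k ∈ Finset.Icc (1:ℤ) (d:ℤ), f k ≤ Real.log d + 1 := by
    refine le_trans (le_of_eq (Finset.sum_congr rfl fun k hk => ?_)) (sum_inv_natAbs d)
    simp only [Finset.mem_Icc] at hk
    simp [hf, show k ≠ 0 by omega]
  linarith


lemma shift_kron_diag_norm_le {g : ℕ} [NeZero g] (k : ZMod g)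
    {ι : Type*} [Fintype ι] [DecidableEq ι] (v : ι → ℝ) (B : ℝ) (hB : 0 ≤ B)
    (hv : ∀ i, |v i| ≤ B) :
    ‖(∑ x : ZMod g, Matrix.single (x - k) x (1 : ℂ)) ⊗ₖ
      Matrix.diagonal (fun i => ((v i : ℝ) : ℂ))‖ ≤ B := by
  set A : Matrix (ZMod g × ι) (ZMod g × ι) ℂ :=
    (∑ x : ZMod g, Matrix.single (x - k) x (1 : ℂ)) ⊗ₖ
      Matrix.diagonal (fun i => ((v i : ℝ) : ℂ)) with hAdef
  have hA : ∀ (p r : ZMod g × ι),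
      A p r = if r = (p.1 + k, p.2) then ((v p.2 : ℝ) : ℂ) else 0 := by
    rintro ⟨i, q⟩ ⟨j, r⟩
    rw [hAdef, Matrix.kroneckerMap_apply, Matrix.sum_apply]
    have h1 : ∀ x : ZMod g, Matrix.single (x - k) x (1 : ℂ) i j
        = if x = j then (if i = j - k then (1:ℂ) else 0) else 0 := by
      intro x
      by_cases h : x = j
      · subst h
        by_cases h2 : i = x - k <;>
          simp [Matrix.single, Matrix.of_apply, h2, eq_comm]
      · simp [Matrix.single, Matrix.of_apply, h, eq_comm]
    simp only [h1]
    rw [Finset.sum_ite_eq' Finset.univ j, Matrix.diagonal_apply]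
    simp only [Finset.mem_univ, if_true]
    have hiff : (i = j - k) ↔ (j = i + k) := by constructor <;> intro h <;> rw [h] <;> ring
    by_cases hj : j = i + k <;> by_cases hq : r = q
    · subst hq; simp [hj, hiff, Prod.ext_iff, eq_comm]
    · simp only [hiff] at *
      rw [if_neg (fun h : q = r => hq h.symm)]
      simp [hj, Prod.ext_iff, hq]
    · subst hq; simp [hj, hiff, Prod.ext_iff, eq_comm]
    · simp [hj, hiff, Prod.ext_iff, hq, fun h : q = r => hq h.symm]
  have hmul : ∀ y : ZMod g × ι → ℂ,
      A.mulVec y = fun p => ((v p.2 : ℝ) : ℂ) * y (p.1 + k, p.2) := by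
    intro y; funext p
    simp only [Matrix.mulVec, dotProduct, hA]
    rw [Finset.sum_eq_single ((p.1 + k, p.2) : ZMod g × ι)]
    · simp
    · intro b _ hb; simp [hb]
    · intro h; exact absurd (Finset.mem_univ _) h
  rw [Matrix.l2_opNorm_def]
  refine ContinuousLinearMap.opNorm_le_bound _ hB fun x => ?_
  rw [LinearEquiv.trans_apply]
  rw [show ⇑(LinearMap.toContinuousLinearMap (Matrix.toEuclideanLin A)) = ⇑(Matrix.toEuclideanLin A) from rfl]
  rw [Matrix.toEuclideanLin_apply, hmul, EuclideanSpace.norm_eq, EuclideanSpace.norm_eq (𝕜 := ℂ) x]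
  set y : (ZMod g × ι) → ℂ := (WithLp.equiv 2 ((ZMod g × ι) → ℂ)) x with hy
  have hcoord : ∀ p : ZMod g × ι,
      ((WithLp.equiv 2 ((ZMod g × ι) → ℂ)).symm
        (fun p => ((v p.2 : ℝ) : ℂ) * y (p.1 + k, p.2))) p
      = ((v p.2 : ℝ) : ℂ) * y (p.1 + k, p.2) := fun p => rfl
  have hxy : ∀ p : ZMod g × ι, (x : EuclideanSpace ℂ (ZMod g × ι)) p = y p := fun p => rfl
  simp only [hcoord, hxy]
  have hσ : Function.Bijective (fun p : ZMod g × ι => ((p.1 + k, p.2) : ZMod g × ι)) :=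
    (Equiv.prodCongr (Equiv.addRight k) (Equiv.refl ι)).bijective
  have hsum : ∑ p : ZMod g × ι, ‖y (p.1 + k, p.2)‖ ^ 2 = ∑ p : ZMod g × ι, ‖y p‖ ^ 2 :=
    Fintype.sum_bijective _ hσ _ _ (fun p => rfl)
  have hbound : ∑ p : ZMod g × ι, ‖((v p.2 : ℝ) : ℂ) * y (p.1 + k, p.2)‖ ^ 2
      ≤ B ^ 2 * ∑ p : ZMod g × ι, ‖y p‖ ^ 2 := by
    rw [← hsum, Finset.mul_sum]
    refine Finset.sum_le_sum fun p _ => ?_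
    rw [norm_mul, mul_pow]
    have h2 : ‖((v p.2 : ℝ) : ℂ)‖ ^ 2 ≤ B ^ 2 := by
      rw [Complex.norm_real, Real.norm_eq_abs]
      exact pow_le_pow_left₀ (abs_nonneg _) (hv p.2) 2
    exact mul_le_mul_of_nonneg_right h2 (by positivity)
  calc Real.sqrt (∑ p : ZMod g × ι, ‖((v p.2 : ℝ) : ℂ) * y (p.1 + k, p.2)‖ ^ 2)
      ≤ Real.sqrt (B ^ 2 * ∑ p : ZMod g × ι, ‖y p‖ ^ 2) := Real.sqrt_le_sqrt hbound
    _ = B * Real.sqrt (∑ p : ZMod g × ι, ‖y p‖ ^ 2) := by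
        rw [Real.sqrt_mul (by positivity), Real.sqrt_sq hB]

lemma sum_kronecker' {R : Type*} [CommRing R] {m n p q : Type*} [Fintype m] [Fintype n]
    {β : Type*} (s : Finset β) (A : β → Matrix m n R) (B : Matrix p q R) :
    (∑ i ∈ s, A i) ⊗ₖ B = ∑ i ∈ s, (A i ⊗ₖ B) := by
  ext pc pd
  obtain ⟨a, b⟩ := pc
  obtain ⟨c', d'⟩ := pd
  simp [Matrix.sum_apply, Matrix.kroneckerMap_apply, Finset.sum_mul]

/-- **Spectral norm bound on the NVT kinetic Liouvillian term** `K^{(NVT)}_{n,j} = D ⊗ M`, with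
`M` the diagonal matrix `p̂'·h_{p'}/(m·(ŝ·h_s + s_min)²)` indexed by momentum-bath pairs:
`‖D ⊗ M‖ ≤ (p'_max/(m_min·s_min²))·2·(ln d + 1)/h_x` where `p'_max = g_{p'}·h_{p'}`. -/
theorem kinetic_NVT_norm_le (gx gp' gs : ℕ) [NeZero gx] (hgp' : 0 < gp') (hgs : 0 < gs)
    (d : ℕ) (hd : 1 ≤ d) (hx hp' hs : ℝ) (hhx : 0 < hx) (hhp' : 0 < hp') (hhs : 0 < hs)
    (m mmin smin : ℝ) (hm : mmin ≤ m) (hmmin : 0 < mmin) (hsmin : 0 < smin) :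
    ‖discreteDeriv gx hx d ⊗ₖ
        Matrix.diagonal (fun q : Fin gp' × Fin gs =>
          (((q.1 : ℕ) * hp' / (m * ((q.2 : ℕ) * hs + smin) ^ 2) : ℝ) : ℂ))‖ ≤
      (gp' * hp' / (mmin * smin ^ 2)) * (2 * (Real.log d + 1) / hx) := by
  classical
  set B : ℝ := (gp' : ℝ) * hp' / (mmin * smin ^ 2) with hBdef
  have hm' : (0:ℝ) < m := lt_of_lt_of_le hmmin hm
  have hB : 0 ≤ B := by positivity
  set v : Fin gp' × Fin gs → ℝ :=
    fun q => (q.1 : ℕ) * hp' / (m * ((q.2 : ℕ) * hs + smin) ^ 2) with hvdef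
  have hv : ∀ q, |v q| ≤ B := by
    intro q
    have h0 : 0 ≤ v q := div_nonneg (by positivity) (by positivity)
    rw [abs_of_nonneg h0, hvdef, hBdef]
    refine div_le_div₀ (by positivity) ?_ (by positivity) ?_
    · exact mul_le_mul_of_nonneg_right (Nat.cast_le.mpr q.1.is_lt.le) hhp'.le
    · refine mul_le_mul hm ?_ (by positivity) hm'.le
      refine pow_le_pow_left₀ hsmin.le ?_ 2
      exact le_add_of_nonneg_left (by positivity)
  set M : Matrix (Fin gp' × Fin gs) (Fin gp' × Fin gs) ℂ :=
    Matrix.diagonal (fun q : Fin gp' × Fin gs =>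
      (((q.1 : ℕ) * hp' / (m * ((q.2 : ℕ) * hs + smin) ^ 2) : ℝ) : ℂ)) with hMdef
  have hMv : M = Matrix.diagonal (fun q => ((v q : ℝ) : ℂ)) := rfl
  have hdecomp : discreteDeriv gx hx d ⊗ₖ M
      = ((1 / hx : ℝ) : ℂ) • ∑ k ∈ Finset.Icc (-(d : ℤ)) (d : ℤ),
          ((centralFDCoeff d k : ℝ) : ℂ) •
            ((∑ x : ZMod gx, Matrix.single (x - (k : ZMod gx)) x (1 : ℂ)) ⊗ₖ M) := by
    rw [discreteDeriv, Matrix.smul_kronecker, sum_kronecker']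
    congr 1
    rw [Finset.sum_congr rfl fun x _ => sum_kronecker' _ _ M]
    rw [Finset.sum_comm]
    refine Finset.sum_congr rfl fun k _ => ?_
    rw [Finset.sum_congr rfl fun x _ => Matrix.smul_kronecker ((centralFDCoeff d k : ℝ) : ℂ) _ M,
      ← Finset.smul_sum, ← sum_kronecker']
  rw [hdecomp, norm_smul, Complex.norm_real, Real.norm_eq_abs,
    abs_of_pos (by positivity : (0:ℝ) < 1 / hx)]
  have hsum_le : ‖∑ k ∈ Finset.Icc (-(d : ℤ)) (d : ℤ),
      ((centralFDCoeff d k : ℝ) : ℂ) •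
        ((∑ x : ZMod gx, Matrix.single (x - (k : ZMod gx)) x (1 : ℂ)) ⊗ₖ M)‖
      ≤ 2 * (Real.log d + 1) * B := by
    refine le_trans (norm_sum_le _ _) ?_
    have hstep : ∀ k ∈ Finset.Icc (-(d : ℤ)) (d : ℤ),
        ‖((centralFDCoeff d k : ℝ) : ℂ) •
          ((∑ x : ZMod gx, Matrix.single (x - (k : ZMod gx)) x (1 : ℂ)) ⊗ₖ M)‖
        ≤ |centralFDCoeff d k| * B := by
      intro k _
      rw [norm_smul, Complex.norm_real, Real.norm_eq_abs]
      refine mul_le_mul_of_nonneg_left ?_ (abs_nonneg _)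
      rw [hMv]
      exact shift_kron_diag_norm_le ((k : ZMod gx)) v B hB hv
    refine le_trans (Finset.sum_le_sum hstep) ?_
    rw [← Finset.sum_mul]
    exact mul_le_mul_of_nonneg_right (sum_abs_coeff_le d) hB
  have hlog : 0 ≤ Real.log d := Real.log_nonneg (by exact_mod_cast hd)
  calc (1 / hx) * ‖∑ k ∈ Finset.Icc (-(d : ℤ)) (d : ℤ),
        ((centralFDCoeff d k : ℝ) : ℂ) •
          ((∑ x : ZMod gx, Matrix.single (x - (k : ZMod gx)) x (1 : ℂ)) ⊗ₖ M)‖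
      ≤ (1 / hx) * (2 * (Real.log d + 1) * B) :=
        mul_le_mul_of_nonneg_left hsum_le (by positivity)
    _ = B * (2 * (Real.log d + 1) / hx) := by field_simp
end

section
/- Let ι be a finite nonempty type, let d_e ≥ 1 be an integer, let h_x, h_p > 0 and λ ≥ 0 be reals, and let E : {−d_e,…,d_e} × ι → ℝ satisfy |E(k,i)| ≤ λ for all k and i. Let D^el be the diagonal matrix on ℂ^ι with entries D^el_{i,i} = (1/h_x)·Σ_{k=−d_e}^{d_e} c_{d_e,k}·E(k,i). Let g_p be a positive integer and let D¹ be the first-order central difference operator with periodic boundary conditions on ℂ^{ℤ/g_pℤ} with grid spacing h_p. Then ‖D^el ⊗ D¹‖ ≤ λ · 2·(ln d_e + 1)/(h_x·h_p). -/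
open scoped Matrix.Norms.L2Operator Kronecker

/-- The first-order central difference operator with periodic boundary conditions on
`ℂ^{ℤ/gℤ}` with grid spacing `h`:  `D¹ = (1/(2h))·Σ_p (E_{p-1,p} − E_{p,p-1})`. -/
noncomputable def centralDiff1 (g : ℕ) [NeZero g] (h : ℝ) : Matrix (ZMod g) (ZMod g) ℂ :=
  ((1 / (2 * h) : ℝ) : ℂ) •
    ∑ p : ZMod g,
      (Matrix.single (p - 1) p (1 : ℂ) - Matrix.single p (p - 1) (1 : ℂ))

open Matrix

private lemma my_l2_opNorm_le {m n : Type*} [Fintype m] [Fintype n]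
    [DecidableEq n] (A : Matrix m n ℂ) {c : ℝ} (hc : 0 ≤ c)
    (h : ∀ x : EuclideanSpace ℂ n,
      ‖(WithLp.equiv 2 (m → ℂ)).symm (A *ᵥ (WithLp.equiv 2 (n → ℂ)) x)‖ ≤ c * ‖x‖) :
    ‖A‖ ≤ c := by
  rw [Matrix.l2_opNorm_def]
  exact ContinuousLinearMap.opNorm_le_bound _ hc fun x => h x

private lemma centralDiff1_mulVec (g : ℕ) [NeZero g] (h : ℝ) (v : ZMod g → ℂ) :
    centralDiff1 g h *ᵥ v = fun q => ((1 / (2 * h) : ℝ) : ℂ) * (v (q + 1) - v (q - 1)) := by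
  funext q
  simp only [centralDiff1, Matrix.smul_mulVec, Pi.smul_apply, smul_eq_mul]
  congr 1
  simp only [Matrix.mulVec, dotProduct, Matrix.sum_apply, Matrix.sub_apply,
    Matrix.single, Matrix.of_apply, sub_mul, ite_mul, one_mul, zero_mul,
    Finset.sum_sub_distrib]
  have h1 : ∀ x : ZMod g, (∑ x1 : ZMod g, if x1 - 1 = q ∧ x1 = x then (1:ℂ) else 0)
      = if x = q + 1 then 1 else 0 := by
    intro x
    rw [Finset.sum_eq_single x (fun b _ hb => by simp [hb]) (by simp)]
    by_cases hx : x = q + 1 <;> simp [hx, sub_eq_iff_eq_add]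
  have h2 : ∀ x : ZMod g, (∑ x1 : ZMod g, if x1 = q ∧ x1 - 1 = x then (1:ℂ) else 0)
      = if x = q - 1 then 1 else 0 := by
    intro x
    rw [Finset.sum_eq_single q (fun b _ hb => by simp [hb]) (by simp)]
    by_cases hx : x = q - 1 <;> simp [hx, eq_comm]
  simp only [h1, h2, ite_mul, one_mul, zero_mul, Finset.sum_ite_eq', Finset.mem_univ, if_true]

private lemma euclidean_comp_equiv_norm {α : Type*} [Fintype α] (x : EuclideanSpace ℂ α)
    (e : α ≃ α) : ‖(WithLp.equiv 2 (α → ℂ)).symm (fun q => x (e q))‖ = ‖x‖ := by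
  simp only [EuclideanSpace.norm_eq]
  congr 1
  exact Fintype.sum_equiv e _ _ (fun q => by simp)

private lemma centralDiff1_norm_le (g : ℕ) [NeZero g] {h : ℝ} (hh : 0 < h) :
    ‖centralDiff1 g h‖ ≤ 1 / h := by
  apply my_l2_opNorm_le _ (by positivity)
  intro x
  rw [centralDiff1_mulVec]
  have key : (WithLp.equiv 2 (ZMod g → ℂ)).symm
        (fun q => ((1 / (2 * h) : ℝ) : ℂ) *
          ((WithLp.equiv 2 (ZMod g → ℂ)) x (q + 1) - (WithLp.equiv 2 (ZMod g → ℂ)) x (q - 1)))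
      = ((1 / (2 * h) : ℝ) : ℂ) •
        ((WithLp.equiv 2 (ZMod g → ℂ)).symm (fun q => x (Equiv.addRight (1 : ZMod g) q)) -
         (WithLp.equiv 2 (ZMod g → ℂ)).symm (fun q => x (Equiv.subRight (1 : ZMod g) q))) := rfl
  rw [key, norm_smul]
  calc ‖(((1 / (2 * h) : ℝ)) : ℂ)‖ *
      ‖(WithLp.equiv 2 (ZMod g → ℂ)).symm (fun q => x (Equiv.addRight (1 : ZMod g) q)) -
       (WithLp.equiv 2 (ZMod g → ℂ)).symm (fun q => x (Equiv.subRight (1 : ZMod g) q))‖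
      ≤ (1 / (2 * h)) * (‖x‖ + ‖x‖) := by
        refine mul_le_mul ?_ ((norm_sub_le _ _).trans ?_) (norm_nonneg _) (by positivity)
        · rw [Complex.norm_real, Real.norm_eq_abs, abs_of_pos (by positivity)]
        · rw [euclidean_comp_equiv_norm, euclidean_comp_equiv_norm]
    _ = 1 / h * ‖x‖ := by ring

private lemma diag_kron_norm_le {ι n : Type*} [Fintype ι] [DecidableEq ι] [Fintype n]
    [DecidableEq n] (a : ι → ℂ) (M : Matrix n n ℂ) {c : ℝ} (hc : 0 ≤ c)
    (ha : ∀ i, ‖a i‖ ≤ c) :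
    ‖Matrix.diagonal a ⊗ₖ M‖ ≤ c * ‖M‖ := by
  apply my_l2_opNorm_le _ (by positivity)
  intro x
  have hsq : ∀ (w : EuclideanSpace ℂ n), ∑ p : n, ‖w p‖ ^ 2 = ‖w‖ ^ 2 :=
    fun w => (PiLp.norm_sq_eq_of_L2 _ w).symm
  have hmv : ∀ (i : ι) (p : n),
      ((Matrix.diagonal a ⊗ₖ M) *ᵥ (WithLp.equiv 2 (ι × n → ℂ)) x) (i, p)
        = a i * (M *ᵥ fun q => x (i, q)) p := by
    intro i p
    simp only [Matrix.mulVec, dotProduct, Fintype.sum_prod_type, Matrix.kroneckerMap_apply,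
      Matrix.diagonal_apply, ite_mul, zero_mul, mul_assoc]
    rw [Finset.sum_comm]
    simp only [Finset.sum_ite_eq, Finset.mem_univ, if_true, Finset.mul_sum]
    rfl
  have hx2 : ‖x‖ ^ 2 = ∑ i : ι, ∑ q : n, ‖x (i, q)‖ ^ 2 := by
    rw [PiLp.norm_sq_eq_of_L2, Fintype.sum_prod_type]
  have key : ‖(WithLp.equiv 2 (ι × n → ℂ)).symm
        ((Matrix.diagonal a ⊗ₖ M) *ᵥ (WithLp.equiv 2 (ι × n → ℂ)) x)‖ ^ 2
      ≤ (c * ‖M‖ * ‖x‖) ^ 2 := by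
    rw [PiLp.norm_sq_eq_of_L2]
    calc ∑ z : ι × n, ‖((Matrix.diagonal a ⊗ₖ M) *ᵥ (WithLp.equiv 2 (ι × n → ℂ)) x) z‖ ^ 2
        = ∑ i : ι, ∑ p : n, ‖a i‖ ^ 2 * ‖(M *ᵥ fun q => x (i, q)) p‖ ^ 2 := by
          rw [Fintype.sum_prod_type]
          exact Finset.sum_congr rfl fun i _ => Finset.sum_congr rfl fun p _ => by
            rw [hmv i p, norm_mul, mul_pow]
      _ = ∑ i : ι, ‖a i‖ ^ 2 *
            ‖(WithLp.equiv 2 (n → ℂ)).symm (M *ᵥ fun q => x (i, q))‖ ^ 2 := by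
          refine Finset.sum_congr rfl fun i _ => ?_
          rw [← Finset.mul_sum]
          exact congrArg (‖a i‖ ^ 2 * ·)
            (hsq ((WithLp.equiv 2 (n → ℂ)).symm (M *ᵥ fun q => x (i, q))))
      _ ≤ ∑ i : ι, c ^ 2 * (‖M‖ * ‖(WithLp.equiv 2 (n → ℂ)).symm fun q => x (i, q)‖) ^ 2 := by
          refine Finset.sum_le_sum fun i _ => ?_
          have h1 : ‖(WithLp.equiv 2 (n → ℂ)).symm (M *ᵥ fun q => x (i, q))‖
              ≤ ‖M‖ * ‖(WithLp.equiv 2 (n → ℂ)).symm fun q => x (i, q)‖ :=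
            Matrix.l2_opNorm_mulVec M ((WithLp.equiv 2 (n → ℂ)).symm fun q => x (i, q))
          exact mul_le_mul (pow_le_pow_left₀ (norm_nonneg _) (ha i) 2)
            (pow_le_pow_left₀ (norm_nonneg _) h1 2) (by positivity) (by positivity)
      _ = c ^ 2 * ‖M‖ ^ 2 * ∑ i : ι, ‖(WithLp.equiv 2 (n → ℂ)).symm fun q => x (i, q)‖ ^ 2 := by
          rw [Finset.mul_sum]; exact Finset.sum_congr rfl fun i _ => by ring
      _ = (c * ‖M‖ * ‖x‖) ^ 2 := by
          have hx2' : ∑ i : ι, ‖(WithLp.equiv 2 (n → ℂ)).symm fun q => x (i, q)‖ ^ 2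
              = ‖x‖ ^ 2 := by
            rw [hx2]
            exact Finset.sum_congr rfl fun i _ =>
              (hsq ((WithLp.equiv 2 (n → ℂ)).symm fun q => x (i, q))).symm
          rw [mul_pow, mul_pow, ← hx2']
  calc ‖(WithLp.equiv 2 (ι × n → ℂ)).symm
        ((Matrix.diagonal a ⊗ₖ M) *ᵥ (WithLp.equiv 2 (ι × n → ℂ)) x)‖
      = Real.sqrt (‖(WithLp.equiv 2 (ι × n → ℂ)).symm
        ((Matrix.diagonal a ⊗ₖ M) *ᵥ (WithLp.equiv 2 (ι × n → ℂ)) x)‖ ^ 2) :=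
        (Real.sqrt_sq (norm_nonneg _)).symm
    _ ≤ Real.sqrt ((c * ‖M‖ * ‖x‖) ^ 2) := Real.sqrt_le_sqrt key
    _ = c * ‖M‖ * ‖x‖ := Real.sqrt_sq (by positivity)

private lemma fact_sq_le_s14 (d : ℕ) (k : ℤ) (hk : k ∈ Finset.Icc (-(d:ℤ)) d) :
    d.factorial * d.factorial
      ≤ ((d:ℤ) - k).toNat.factorial * ((d:ℤ) + k).toNat.factorial := by
  simp only [Finset.mem_Icc] at hk
  set a := ((d:ℤ) - k).toNat with ha
  set b := ((d:ℤ) + k).toNat with hb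
  have hab : a + b = 2 * d := by omega
  have ha2 : a ≤ 2 * d := by omega
  have hd2 : d ≤ 2 * d := by omega
  have e1 : (2*d).choose a * a.factorial * b.factorial = (2*d).factorial := by
    have := Nat.choose_mul_factorial_mul_factorial ha2
    rwa [show 2*d - a = b by omega] at this
  have e2 : (2*d).choose d * d.factorial * d.factorial = (2*d).factorial := by
    have := Nat.choose_mul_factorial_mul_factorial hd2
    rwa [show 2*d - d = d by omega] at this
  have hle : (2*d).choose a ≤ (2*d).choose d := by
    have := Nat.choose_le_middle a (2*d)
    rwa [Nat.mul_div_cancel_left d (by norm_num : 0 < 2)] at this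
  have hpos : 0 < (2*d).choose d := Nat.choose_pos hd2
  have key : (2*d).choose d * (d.factorial * d.factorial)
      ≤ (2*d).choose d * (a.factorial * b.factorial) := by
    calc (2*d).choose d * (d.factorial * d.factorial) = (2*d).factorial := by
          rw [← e2]; ring
      _ = (2*d).choose a * (a.factorial * b.factorial) := by rw [← e1]; ring
      _ ≤ (2*d).choose d * (a.factorial * b.factorial) :=
          Nat.mul_le_mul_right _ hle
  exact Nat.le_of_mul_le_mul_left key hpos

private lemma abs_centralFDCoeff_le_s14 (d : ℕ) (k : ℤ) (hk : k ∈ Finset.Icc (-(d:ℤ)) d) :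
    |centralFDCoeff d k| ≤ if k = 0 then 0 else |(k:ℝ)|⁻¹ := by
  by_cases h0 : k = 0
  · simp [h0, centralFDCoeff]
  rw [if_neg h0]
  rw [centralFDCoeff, if_neg h0]
  have hk0 : (0:ℝ) < |(k:ℝ)| := by
    simp only [abs_pos, ne_eq, Int.cast_eq_zero]; exact h0
  have hfact : ((d.factorial : ℝ)) ^ 2
      ≤ (((d : ℤ) - k).toNat.factorial : ℝ) * (((d : ℤ) + k).toNat.factorial : ℝ) := by
    rw [sq]
    exact_mod_cast fact_sq_le_s14 d k hk
  have h1 : |(-1:ℝ) ^ (k + 1)| = 1 := by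
    rcases Int.even_or_odd (k + 1) with h | h
    · rw [h.neg_one_zpow]; simp
    · rw [h.neg_one_zpow]; simp
  rw [abs_div, abs_mul, h1, one_mul, abs_mul, abs_mul]
  rw [abs_pow, abs_of_nonneg (by positivity : (0:ℝ) ≤ (d.factorial : ℝ)),
    abs_of_nonneg (by positivity : (0:ℝ) ≤ ((((d : ℤ) - k).toNat.factorial : ℕ) : ℝ)),
    abs_of_nonneg (by positivity : (0:ℝ) ≤ ((((d : ℤ) + k).toNat.factorial : ℕ) : ℝ))]
  rw [div_le_iff₀ (by positivity)]
  have h2 : |((k:ℝ))|⁻¹ * (|(k:ℝ)| * (((d : ℤ) - k).toNat.factorial : ℝ)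
      * (((d : ℤ) + k).toNat.factorial : ℝ))
      = (((d : ℤ) - k).toNat.factorial : ℝ) * (((d : ℤ) + k).toNat.factorial : ℝ) := by
    field_simp
  rw [h2]
  exact hfact

private lemma sum_abs_centralFDCoeff_le (d : ℕ) (hd : 1 ≤ d) :
    ∑ k ∈ Finset.Icc (-(d:ℤ)) (d:ℤ), |centralFDCoeff d k| ≤ 2 * (Real.log d + 1) := by
  have hstep : ∑ k ∈ Finset.Icc (-(d:ℤ)) (d:ℤ), |centralFDCoeff d k|
      ≤ ∑ k ∈ Finset.Icc (-(d:ℤ)) (d:ℤ), (if k = 0 then 0 else |(k:ℝ)|⁻¹) :=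
    Finset.sum_le_sum fun k hk => abs_centralFDCoeff_le_s14 d k hk
  refine hstep.trans ?_
  set f : ℤ → ℝ := fun k => if k = 0 then 0 else |(k:ℝ)|⁻¹ with hf
  have hsplit : Finset.Icc (-(d:ℤ)) (d:ℤ)
      = Finset.Ico (-(d:ℤ)) 0 ∪ Finset.Icc 0 (d:ℤ) := by
    ext x; simp only [Finset.mem_Icc, Finset.mem_union, Finset.mem_Ico]; omega
  have hdisj : Disjoint (Finset.Ico (-(d:ℤ)) 0) (Finset.Icc 0 (d:ℤ)) := by
    rw [Finset.disjoint_left]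
    intro x hx hx'
    simp only [Finset.mem_Ico, Finset.mem_Icc] at hx hx'
    omega
  rw [hsplit, Finset.sum_union hdisj]
  have hneg : Finset.Ico (-(d:ℤ)) 0 = Finset.image Neg.neg (Finset.Icc (1:ℤ) d) := by
    ext x
    simp only [Finset.mem_Ico, Finset.mem_image, Finset.mem_Icc]
    constructor
    · intro hx; exact ⟨-x, by omega, by omega⟩
    · rintro ⟨a, ha, rfl⟩; omega
  have hnegsum : ∑ k ∈ Finset.Ico (-(d:ℤ)) 0, f k = ∑ k ∈ Finset.Icc (1:ℤ) d, f k := by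
    rw [hneg, Finset.sum_image (fun a _ b _ h => neg_injective h)]
    exact Finset.sum_congr rfl fun k _ => by simp [hf, neg_eq_zero]
  have hzsum : ∑ k ∈ Finset.Icc (0:ℤ) d, f k = ∑ k ∈ Finset.Icc (1:ℤ) d, f k := by
    refine (Finset.sum_subset (fun x hx => ?_) (fun x hx hx' => ?_)).symm
    · simp only [Finset.mem_Icc] at hx ⊢; omega
    · simp only [Finset.mem_Icc] at hx hx'
      have : x = 0 := by omega
      simp [hf, this]
  have hIcc : Finset.Icc (1:ℤ) d = Finset.image (Nat.cast : ℕ → ℤ) (Finset.Icc 1 d) := by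
    ext x
    simp only [Finset.mem_Icc, Finset.mem_image]
    constructor
    · intro hx; exact ⟨x.toNat, by omega, by omega⟩
    · rintro ⟨a, ha, rfl⟩; omega
  have hharm : ∑ k ∈ Finset.Icc (1:ℤ) d, f k = (harmonic d : ℝ) := by
    rw [hIcc, Finset.sum_image (fun a _ b _ h => Nat.cast_injective h)]
    rw [harmonic_eq_sum_Icc]
    push_cast
    refine Finset.sum_congr rfl fun k hk => ?_
    simp only [Finset.mem_Icc] at hk
    rw [hf]
    simp only [Int.cast_natCast]
    rw [if_neg (by exact_mod_cast Nat.one_le_iff_ne_zero.mp hk.1), abs_of_nonneg (by positivity)]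
  rw [hnegsum, hzsum, hharm]
  have := harmonic_le_one_add_log d
  linarith

/-- **Spectral norm bound on the electronic Liouvillian term** `V^{el}_{n,j} = D^{el} ⊗ D¹`,
with `D^{el}` the diagonal finite-difference matrix of electronic energies bounded by `λ`:
`‖D^{el} ⊗ D¹‖ ≤ λ·2·(ln d_e + 1)/(h_x·h_p)`. -/
theorem electronic_liouvillian_norm_le (ι : Type*) [Fintype ι] [Nonempty ι] [DecidableEq ι]
    (de : ℕ) (hde : 1 ≤ de) (hx hp lam : ℝ) (hhx : 0 < hx) (hhp : 0 < hp) (hlam : 0 ≤ lam)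
    (E : ℤ → ι → ℝ) (hE : ∀ k ∈ Finset.Icc (-(de : ℤ)) (de : ℤ), ∀ i, |E k i| ≤ lam)
    (gp : ℕ) [NeZero gp] :
    ‖Matrix.diagonal (fun i : ι =>
          (((1 / hx) * ∑ k ∈ Finset.Icc (-(de : ℤ)) (de : ℤ), centralFDCoeff de k * E k i
            : ℝ) : ℂ))
        ⊗ₖ centralDiff1 gp hp‖ ≤
      lam * (2 * (Real.log de + 1) / (hx * hp)) := by
  have hlog : (0:ℝ) ≤ Real.log de := Real.log_nonneg (by exact_mod_cast hde)
  set c : ℝ := lam * (2 * (Real.log de + 1)) / hx with hc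
  have hc0 : 0 ≤ c := by positivity
  have hai : ∀ i : ι, ‖(((1 / hx) * ∑ k ∈ Finset.Icc (-(de : ℤ)) (de : ℤ),
      centralFDCoeff de k * E k i : ℝ) : ℂ)‖ ≤ c := by
    intro i
    rw [Complex.norm_real, Real.norm_eq_abs, abs_mul, abs_of_pos (by positivity : (0:ℝ) < 1 / hx)]
    have hsum : |∑ k ∈ Finset.Icc (-(de : ℤ)) (de : ℤ), centralFDCoeff de k * E k i|
        ≤ lam * (2 * (Real.log de + 1)) := by
      calc |∑ k ∈ Finset.Icc (-(de : ℤ)) (de : ℤ), centralFDCoeff de k * E k i|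
          ≤ ∑ k ∈ Finset.Icc (-(de : ℤ)) (de : ℤ), |centralFDCoeff de k * E k i| :=
            Finset.abs_sum_le_sum_abs _ _
        _ ≤ ∑ k ∈ Finset.Icc (-(de : ℤ)) (de : ℤ), |centralFDCoeff de k| * lam := by
            refine Finset.sum_le_sum fun k hk => ?_
            rw [abs_mul]
            exact mul_le_mul_of_nonneg_left (hE k hk i) (abs_nonneg _)
        _ = (∑ k ∈ Finset.Icc (-(de : ℤ)) (de : ℤ), |centralFDCoeff de k|) * lam := by
            rw [Finset.sum_mul]
        _ ≤ 2 * (Real.log de + 1) * lam :=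
            mul_le_mul_of_nonneg_right (sum_abs_centralFDCoeff_le de hde) hlam
        _ = lam * (2 * (Real.log de + 1)) := by ring
    calc 1 / hx * |∑ k ∈ Finset.Icc (-(de : ℤ)) (de : ℤ), centralFDCoeff de k * E k i|
        ≤ 1 / hx * (lam * (2 * (Real.log de + 1))) :=
          mul_le_mul_of_nonneg_left hsum (by positivity)
      _ = c := by rw [hc]; ring
  calc ‖Matrix.diagonal (fun i : ι =>
          (((1 / hx) * ∑ k ∈ Finset.Icc (-(de : ℤ)) (de : ℤ), centralFDCoeff de k * E k i
            : ℝ) : ℂ)) ⊗ₖ centralDiff1 gp hp‖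
      ≤ c * ‖centralDiff1 gp hp‖ := diag_kron_norm_le _ _ hc0 hai
    _ ≤ c * (1 / hp) :=
        mul_le_mul_of_nonneg_left (centralDiff1_norm_le gp hhp) hc0
    _ = lam * (2 * (Real.log de + 1) / (hx * hp)) := by
        rw [hc]; field_simp
end
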